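/- Let γ : ℤ → ℝ≥0 have finite nonempty support S, and define f(p) = Σ_{n∈S} γ(n)^p for p ∈ [0,1]. If Σ_{n∈S} γ(n) log γ(n) < 0 (γ is spartan), then inf_{0<p<1} f(p) = Σ_{n∈S} γ(n). If Σ_{n∈S} log γ(n) > 0 (γ is opulent), then inf_{0<p<1} f(p) = |S|. -/

import Mathlib

private lemma tangent1 {x : ℝ} (hx : 0 < x) (p : ℝ) :
    x + (p - 1) * (x * Real.log x) ≤ x ^ p := by
  have hxp : x ^ p = x * Real.exp ((p - 1) * Real.log x) := by
    rw [Real.rpow_def_of_pos hx, ← Real.exp_log hx, ← Real.exp_add, Real.log_exp]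
    ring_nf
  rw [hxp]
  have h := Real.add_one_le_exp ((p - 1) * Real.log x)
  nlinarith [mul_le_mul_of_nonneg_left h hx.le]

private lemma tangent0 {x : ℝ} (hx : 0 < x) (p : ℝ) :
    1 + p * Real.log x ≤ x ^ p := by
  rw [Real.rpow_def_of_pos hx]
  have h := Real.add_one_le_exp (Real.log x * p)
  linarith [mul_comm p (Real.log x)]

private lemma key (γ : ℤ → ℝ) (S : Finset ℤ) (hγ : ∀ n ∈ S, 0 < γ n)
    (a : ℝ) (ha : a ∈ Set.Icc (0:ℝ) 1)
    (hb : ∀ p ∈ Set.Ioo (0:ℝ) 1, (∑ n ∈ S, γ n ^ a) ≤ ∑ n ∈ S, γ n ^ p) :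
    sInf ((fun p => ∑ n ∈ S, γ n ^ p) '' Set.Ioo (0:ℝ) 1) = ∑ n ∈ S, γ n ^ a := by
  set f : ℝ → ℝ := fun p => ∑ n ∈ S, γ n ^ p with hf
  set b : ℝ := ∑ n ∈ S, γ n ^ a with hbdef
  have hmem : (1/2 : ℝ) ∈ Set.Ioo (0:ℝ) 1 := by norm_num
  have hne' : (f '' Set.Ioo (0:ℝ) 1).Nonempty := ⟨f (1/2), ⟨1/2, hmem, rfl⟩⟩
  have hlb : ∀ y ∈ f '' Set.Ioo (0:ℝ) 1, b ≤ y := by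
    rintro y ⟨p, hp, rfl⟩; exact hb p hp
  have hbdd : BddBelow (f '' Set.Ioo (0:ℝ) 1) := ⟨b, hlb⟩
  -- continuity of f at a within Ioo
  have hcont : Filter.Tendsto f (nhdsWithin a (Set.Ioo (0:ℝ) 1)) (nhds b) := by
    have : Filter.Tendsto f (nhds a) (nhds b) := by
      apply tendsto_finset_sum
      intro n hn
      exact (Real.continuousAt_const_rpow (hγ n hn).ne').tendsto
    exact this.mono_left nhdsWithin_le_nhds
  have hNB : (nhdsWithin a (Set.Ioo (0:ℝ) 1)).NeBot := by
    rw [← mem_closure_iff_nhdsWithin_neBot, closure_Ioo (by norm_num : (0:ℝ) ≠ 1)]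
    exact ha
  refine le_antisymm ?_ (le_csInf hne' hlb)
  by_contra h
  push_neg at h
  have hev : ∀ᶠ p in nhdsWithin a (Set.Ioo (0:ℝ) 1), f p < sInf (f '' Set.Ioo (0:ℝ) 1) :=
    hcont.eventually (Filter.Tendsto.eventually_lt_const h Filter.tendsto_id) |>.mono (fun p hp => hp)
  have hev2 : ∀ᶠ p in nhdsWithin a (Set.Ioo (0:ℝ) 1), p ∈ Set.Ioo (0:ℝ) 1 :=
    eventually_mem_nhdsWithin
  obtain ⟨p, hp1, hp2⟩ := (hev.and hev2).exists
  exact absurd (csInf_le hbdd ⟨p, hp2, rfl⟩) (not_le.mpr hp1)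

theorem stmt_14 (γ : ℤ → ℝ) (hpos : ∀ n, 0 ≤ γ n) (S : Finset ℤ)
    (hS : ∀ n, γ n ≠ 0 ↔ n ∈ S) (hne : S.Nonempty) :
    ((∑ n ∈ S, γ n * Real.log (γ n) < 0 →
        sInf ((fun p => ∑ n ∈ S, γ n ^ p) '' Set.Ioo (0 : ℝ) 1) = ∑ n ∈ S, γ n) ∧
     (0 < ∑ n ∈ S, Real.log (γ n) →
        sInf ((fun p => ∑ n ∈ S, γ n ^ p) '' Set.Ioo (0 : ℝ) 1) = (S.card : ℝ))) := by
  have hγ : ∀ n ∈ S, 0 < γ n := fun n hn =>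
    lt_of_le_of_ne (hpos n) (Ne.symm ((hS n).mpr hn))
  constructor
  · intro hsp
    have h1 : ∀ p ∈ Set.Ioo (0:ℝ) 1, (∑ n ∈ S, γ n ^ (1:ℝ)) ≤ ∑ n ∈ S, γ n ^ p := by
      intro p hp
      have step : ∑ n ∈ S, (γ n + (p - 1) * (γ n * Real.log (γ n))) ≤ ∑ n ∈ S, γ n ^ p :=
        Finset.sum_le_sum fun n hn => tangent1 (hγ n hn) p
      have expand : ∑ n ∈ S, (γ n + (p - 1) * (γ n * Real.log (γ n)))
          = (∑ n ∈ S, γ n) + (p - 1) * ∑ n ∈ S, γ n * Real.log (γ n) := by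
        rw [Finset.sum_add_distrib, Finset.mul_sum]
      have hpos2 : 0 ≤ (p - 1) * ∑ n ∈ S, γ n * Real.log (γ n) :=
        by nlinarith [hp.2, hsp]
      calc ∑ n ∈ S, γ n ^ (1:ℝ) = ∑ n ∈ S, γ n := by
            exact Finset.sum_congr rfl fun n _ => Real.rpow_one _
        _ ≤ (∑ n ∈ S, γ n) + (p - 1) * ∑ n ∈ S, γ n * Real.log (γ n) := by linarith
        _ = ∑ n ∈ S, (γ n + (p - 1) * (γ n * Real.log (γ n))) := expand.symm
        _ ≤ _ := step
    have := key γ S hγ 1 (by norm_num) h1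
    rw [this]
    exact Finset.sum_congr rfl fun n _ => Real.rpow_one _
  · intro hop
    have h0 : ∀ p ∈ Set.Ioo (0:ℝ) 1, (∑ n ∈ S, γ n ^ (0:ℝ)) ≤ ∑ n ∈ S, γ n ^ p := by
      intro p hp
      have step : ∑ n ∈ S, (1 + p * Real.log (γ n)) ≤ ∑ n ∈ S, γ n ^ p :=
        Finset.sum_le_sum fun n hn => tangent0 (hγ n hn) p
      have expand : ∑ n ∈ S, (1 + p * Real.log (γ n))
          = (S.card : ℝ) + p * ∑ n ∈ S, Real.log (γ n) := by
        rw [Finset.sum_add_distrib, Finset.sum_const, Finset.mul_sum]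
        simp
      have hpos2 : 0 ≤ p * ∑ n ∈ S, Real.log (γ n) :=
        mul_nonneg hp.1.le hop.le
      calc ∑ n ∈ S, γ n ^ (0:ℝ) = (S.card : ℝ) := by
            simp [Real.rpow_zero]
        _ ≤ (S.card : ℝ) + p * ∑ n ∈ S, Real.log (γ n) := by linarith
        _ = ∑ n ∈ S, (1 + p * Real.log (γ n)) := expand.symm
        _ ≤ _ := step
    have := key γ S hγ 0 (by norm_num) h0
    rw [this]
    simp [Real.rpow_zero]
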